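/- Let μ be a nonnegative measure on (0,∞) with ∫ min(1, 1/λ) dμ(λ) < ∞ and define φ(D) = ∫_0^∞ (1 − exp(−λD))/λ dμ(λ). Then for every integer p ≥ 1 and every finite collection of points x_1,...,x_n ∈ ℝ^p, there exist points y_1,...,y_n in a real Hilbert space (e.g. ℓ²(ℕ, ℝ)) such that ‖y_i − y_j‖² = φ(‖x_i − x_j‖²) for all i, j. -/

import Mathlib

open Finset MeasureTheory Set

/-- `d` is realizable as the matrix of squared distances between `n` points of a
real Hilbert space. -/
def IsHilbertSqDistMatrix {n : ℕ} (d : Fin n → Fin n → ℝ) : Prop :=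
  ∃ (H : Type) (inst : NormedAddCommGroup H),
    letI := inst
    ∃ (_ : InnerProductSpace ℝ H) (_ : CompleteSpace H) (y : Fin n → H),
      ∀ i j, ‖y i - y j‖ ^ 2 = d i j


section PSD

variable {m : ℕ}

/-- Package a symmetric real matrix with nonnegative quadratic form as `PosSemidef`. -/
lemma posSemidef_of_quadform (M : Matrix (Fin m) (Fin m) ℝ)
    (hsym : ∀ i j, M i j = M j i)
    (h : ∀ c : Fin m → ℝ, 0 ≤ ∑ i, ∑ j, c i * c j * M i j) : M.PosSemidef := by
  refine Matrix.PosSemidef.of_dotProduct_mulVec_nonneg ?_ ?_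
  · ext i j
    simp [Matrix.conjTranspose_apply, hsym i j]
  · intro c
    have := h c
    have heq : dotProduct (star c) (M.mulVec c) = ∑ i, ∑ j, c i * c j * M i j := by
      simp only [dotProduct, Matrix.mulVec, Pi.star_apply, star_trivial,
        Finset.mul_sum]
      refine Finset.sum_congr rfl fun i _ => Finset.sum_congr rfl fun j _ => by ring
    rw [heq]
    exact this

lemma quadform_of_posSemidef {M : Matrix (Fin m) (Fin m) ℝ} (hM : M.PosSemidef)
    (c : Fin m → ℝ) : 0 ≤ ∑ i, ∑ j, c i * c j * M i j := by
  have := hM.dotProduct_mulVec_nonneg c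
  have heq : dotProduct (star c) (M.mulVec c) = ∑ i, ∑ j, c i * c j * M i j := by
    simp only [dotProduct, Matrix.mulVec, Pi.star_apply, star_trivial, Finset.mul_sum]
    refine Finset.sum_congr rfl fun i _ => Finset.sum_congr rfl fun j _ => by ring
  rwa [heq] at this

open scoped MatrixOrder in
/-- Schur product theorem (quadratic form version). -/
lemma schur_quadform {M N : Matrix (Fin m) (Fin m) ℝ} (hM : M.PosSemidef)
    (hN : N.PosSemidef) (c : Fin m → ℝ) :
    0 ≤ ∑ i, ∑ j, c i * c j * (M i j * N i j) := by
  set B := CFC.sqrt M with hB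
  have hBB : B * B = M := CFC.sqrt_mul_sqrt_self M hM.nonneg
  have hBsym : ∀ i j, B i j = B j i := by
    intro i j
    have := (Matrix.nonneg_iff_posSemidef.mp (CFC.sqrt_nonneg M)).1
    calc B i j = star (B i j) := (star_trivial _).symm
      _ = B.conjTranspose j i := rfl
      _ = B j i := by rw [this]
  have hMentry : ∀ i j, M i j = ∑ k, B i k * B j k := by
    intro i j
    rw [← hBB]
    simp [Matrix.mul_apply]
    exact Finset.sum_congr rfl fun k _ => by rw [hBsym k j]
  have key : ∑ i, ∑ j, c i * c j * (M i j * N i j)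
      = ∑ k, ∑ i, ∑ j, (c i * B i k) * (c j * B j k) * N i j := by
    have step1 : ∑ i, ∑ j, c i * c j * (M i j * N i j)
        = ∑ i, ∑ j, ∑ k, (c i * B i k) * (c j * B j k) * N i j := by
      refine Finset.sum_congr rfl fun i _ => Finset.sum_congr rfl fun j _ => ?_
      rw [hMentry i j, Finset.sum_mul, Finset.mul_sum]
      refine Finset.sum_congr rfl fun k _ => by ring
    rw [step1]
    calc ∑ i, ∑ j, ∑ k, (c i * B i k) * (c j * B j k) * N i j
        = ∑ i, ∑ k, ∑ j, (c i * B i k) * (c j * B j k) * N i j :=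
          Finset.sum_congr rfl fun i _ => Finset.sum_comm
      _ = ∑ k, ∑ i, ∑ j, (c i * B i k) * (c j * B j k) * N i j := Finset.sum_comm
  rw [key]
  refine Finset.sum_nonneg fun k _ => ?_
  exact quadform_of_posSemidef hN (fun i => c i * B i k)

end PSD

section Gauss

variable {m : ℕ} {E : Type*} [NormedAddCommGroup E] [InnerProductSpace ℝ E]

lemma gram_quadform (z : Fin m → E) (c : Fin m → ℝ) :
    0 ≤ ∑ i, ∑ j, c i * c j * (inner ℝ (z i) (z j) : ℝ) := by
  have : ∑ i, ∑ j, c i * c j * (inner ℝ (z i) (z j) : ℝ)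
      = inner ℝ (∑ i, c i • z i) (∑ j, c j • z j) := by
    rw [sum_inner]
    refine Finset.sum_congr rfl fun i _ => ?_
    rw [inner_sum]
    refine Finset.sum_congr rfl fun j _ => ?_
    rw [real_inner_smul_left, real_inner_smul_right]
    ring
  rw [this]
  exact real_inner_self_nonneg

lemma pow_gram_posSemidef (z : Fin m → E) (k : ℕ) :
    Matrix.PosSemidef (Matrix.of fun i j => (inner ℝ (z i) (z j) : ℝ) ^ k) := by
  induction k with
  | zero =>
    refine posSemidef_of_quadform _ (fun i j => by simp) fun c => ?_
    have : ∑ i, ∑ j, c i * c j * ((inner ℝ (z i) (z j) : ℝ)) ^ 0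
        = (∑ i, c i) * (∑ j, c j) := by
      rw [Finset.sum_mul_sum]
      exact Finset.sum_congr rfl fun i _ => Finset.sum_congr rfl fun j _ => by ring
    simp only [Matrix.of_apply]
    rw [this]
    exact mul_self_nonneg _
  | succ k ih =>
    have hgram : Matrix.PosSemidef (Matrix.of fun i j => (inner ℝ (z i) (z j) : ℝ)) := by
      refine posSemidef_of_quadform _ (fun i j => real_inner_comm _ _) fun c => ?_
      simpa using gram_quadform z c
    refine posSemidef_of_quadform _ (fun i j => by simp [real_inner_comm (z i)]) fun c => ?_
    have := schur_quadform ih hgram c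
    simpa [Matrix.of_apply, pow_succ] using this

lemma gauss_quadform (z : Fin m → E) {t : ℝ} (ht : 0 ≤ t) (c : Fin m → ℝ) :
    0 ≤ ∑ i, ∑ j, c i * c j * Real.exp (-(t * ‖z i - z j‖ ^ 2)) := by
  set b : Fin m → ℝ := fun i => c i * Real.exp (-(t * ‖z i‖ ^ 2)) with hb
  have step1 : ∑ i, ∑ j, c i * c j * Real.exp (-(t * ‖z i - z j‖ ^ 2))
      = ∑ i, ∑ j, b i * b j * Real.exp (2 * t * (inner ℝ (z i) (z j) : ℝ)) := by
    refine Finset.sum_congr rfl fun i _ => Finset.sum_congr rfl fun j _ => ?_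
    have harg : -(t * ‖z i - z j‖ ^ 2)
        = -(t * ‖z i‖ ^ 2) + 2 * t * (inner ℝ (z i) (z j) : ℝ) + -(t * ‖z j‖ ^ 2) := by
      rw [norm_sub_sq_real]; ring
    rw [harg, Real.exp_add, Real.exp_add, hb]
    ring
  rw [step1]
  have step2 : ∀ i j : Fin m, b i * b j * Real.exp (2 * t * (inner ℝ (z i) (z j) : ℝ))
      = ∑' k : ℕ, b i * b j * ((2 * t) ^ k * (inner ℝ (z i) (z j) : ℝ) ^ k / k.factorial) := by
    intro i j
    have hexp : Real.exp (2 * t * (inner ℝ (z i) (z j) : ℝ))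
        = ∑' k : ℕ, (2 * t * (inner ℝ (z i) (z j) : ℝ)) ^ k / k.factorial := by
      rw [Real.exp_eq_exp_ℝ, NormedSpace.exp_eq_tsum_div]
    rw [hexp, ← tsum_mul_left]
    refine tsum_congr fun k => by rw [mul_pow]
  have hsummable : ∀ i j : Fin m,
      Summable (fun k : ℕ => b i * b j * ((2 * t) ^ k * (inner ℝ (z i) (z j) : ℝ) ^ k / k.factorial)) := by
    intro i j
    have := Real.summable_pow_div_factorial (2 * t * (inner ℝ (z i) (z j) : ℝ))
    refine ((this.mul_left (b i * b j)).congr fun k => ?_)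
    rw [mul_pow]
  calc (0:ℝ) ≤ ∑' k : ℕ, ∑ i, ∑ j, b i * b j * ((2 * t) ^ k * (inner ℝ (z i) (z j) : ℝ) ^ k / k.factorial) := by
        refine tsum_nonneg fun k => ?_
        have h1 : ∑ i, ∑ j, b i * b j * ((2 * t) ^ k * (inner ℝ (z i) (z j) : ℝ) ^ k / k.factorial)
            = ((2 * t) ^ k / k.factorial) * ∑ i, ∑ j, b i * b j * ((inner ℝ (z i) (z j) : ℝ) ^ k) := by
          rw [Finset.mul_sum]
          refine Finset.sum_congr rfl fun i _ => ?_
          rw [Finset.mul_sum]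
          refine Finset.sum_congr rfl fun j _ => by ring
        rw [h1]
        have h2 := quadform_of_posSemidef (pow_gram_posSemidef z k) b
        simp only [Matrix.of_apply] at h2
        positivity
    _ = ∑ i, ∑ j, ∑' k : ℕ, b i * b j * ((2 * t) ^ k * (inner ℝ (z i) (z j) : ℝ) ^ k / k.factorial) := by
        rw [Summable.tsum_finsetSum fun i _ => summable_sum fun j _ => hsummable i j]
        exact Finset.sum_congr rfl fun i _ => Summable.tsum_finsetSum fun j _ => hsummable i j
    _ = ∑ i, ∑ j, b i * b j * Real.exp (2 * t * (inner ℝ (z i) (z j) : ℝ)) :=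
        Finset.sum_congr rfl fun i _ => Finset.sum_congr rfl fun j _ => (step2 i j).symm

end Gauss

section Integ

lemma one_sub_exp_div_le {l D : ℝ} (hl : 0 < l) (hD : 0 ≤ D) :
    (1 - Real.exp (-(l * D))) / l ≤ max 1 D * min 1 (1 / l) := by
  have h1 : 1 - Real.exp (-(l * D)) ≤ 1 := by
    have := Real.exp_pos (-(l * D)); linarith
  have h2 : 1 - Real.exp (-(l * D)) ≤ l * D := by
    have := Real.add_one_le_exp (-(l * D)); linarith
  have h0 : 0 ≤ 1 - Real.exp (-(l * D)) := by
    have : Real.exp (-(l * D)) ≤ 1 := by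
      rw [Real.exp_le_one_iff]
      nlinarith
    linarith
  rcases le_total 1 (1 / l) with h | h
  · rw [min_eq_left h]
    calc (1 - Real.exp (-(l * D))) / l ≤ (l * D) / l := by
          exact div_le_div_of_nonneg_right h2 hl.le
      _ = D := by field_simp
      _ ≤ max 1 D * 1 := by rw [mul_one]; exact le_max_right 1 D
  · rw [min_eq_right h]
    calc (1 - Real.exp (-(l * D))) / l ≤ 1 / l := by
          exact div_le_div_of_nonneg_right h1 hl.le
      _ ≤ max 1 D * (1 / l) := by
          nlinarith [le_max_left (1:ℝ) D, one_div_nonneg.mpr hl.le]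

lemma integrable_kernel (μ : Measure ℝ)
    (hμ : ∫⁻ l in Ioi (0 : ℝ), ENNReal.ofReal (min 1 (1 / l)) ∂μ ≠ ⊤)
    {D : ℝ} (hD : 0 ≤ D) :
    IntegrableOn (fun l => (1 - Real.exp (-(l * D))) / l) (Ioi 0) μ := by
  have hmeas : Measurable fun l : ℝ => (1 - Real.exp (-(l * D))) / l :=
    ((measurable_const.sub ((measurable_id.mul_const D).neg.exp)).div measurable_id : )
  have hgmeas : Measurable fun l : ℝ => max 1 D * min 1 (1 / l) :=
    (measurable_const.min (measurable_const.div measurable_id)).const_mul _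
  have hgint : IntegrableOn (fun l => max 1 D * min 1 (1 / l)) (Ioi 0) μ := by
    refine ⟨hgmeas.aestronglyMeasurable, ?_⟩
    rw [HasFiniteIntegral]
    have hcongr : ∫⁻ l in Ioi (0:ℝ), ‖max 1 D * min 1 (1 / l)‖ₑ ∂μ
        = ∫⁻ l in Ioi (0:ℝ), ENNReal.ofReal (max 1 D) * ENNReal.ofReal (min 1 (1 / l)) ∂μ := by
      refine setLIntegral_congr_fun_ae measurableSet_Ioi (ae_of_all _ fun l hl => ?_)
      have hl : (0:ℝ) < l := hl
      have h1 : (0:ℝ) ≤ min 1 (1 / l) := le_min one_pos.le (one_div_nonneg.mpr hl.le)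
      have h2 : (0:ℝ) ≤ max 1 D := le_trans one_pos.le (le_max_left _ _)
      rw [← ENNReal.ofReal_mul h2, ← Real.enorm_eq_ofReal (mul_nonneg h2 h1)]
    have hm2 : Measurable fun l : ℝ => ENNReal.ofReal (min 1 (1 / l)) :=
      (measurable_const.min (measurable_const.div measurable_id')).ennreal_ofReal
    rw [hcongr, lintegral_const_mul _ hm2]
    exact ENNReal.mul_lt_top ENNReal.ofReal_lt_top (lt_top_iff_ne_top.mpr hμ)
  refine Integrable.mono' hgint hmeas.aestronglyMeasurable ?_
  refine (ae_restrict_iff' measurableSet_Ioi).mpr (ae_of_all _ fun l hl => ?_)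
  have hl : (0:ℝ) < l := hl
  have h0 : 0 ≤ (1 - Real.exp (-(l * D))) / l := by
    apply div_nonneg _ hl.le
    have : Real.exp (-(l * D)) ≤ 1 := by
      rw [Real.exp_le_one_iff]; nlinarith
    linarith
  rw [Real.norm_eq_abs, abs_of_nonneg h0]
  exact one_sub_exp_div_le hl hD

end Integ

open scoped MatrixOrder in
lemma realize_psd {n : ℕ} (G : Matrix (Fin n) (Fin n) ℝ) (hG : G.PosSemidef) :
    ∃ y : Fin n → EuclideanSpace ℝ (Fin n), ∀ i j, (inner ℝ (y i) (y j) : ℝ) = G i j := by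
  set B := CFC.sqrt G with hB
  have hBsym : ∀ i j, B i j = B j i := by
    intro i j
    have h := (Matrix.nonneg_iff_posSemidef.mp (CFC.sqrt_nonneg G)).1
    calc B i j = star (B i j) := (star_trivial _).symm
      _ = B.conjTranspose j i := rfl
      _ = B j i := by rw [h]
  refine ⟨fun i => (WithLp.equiv 2 (Fin n → ℝ)).symm (fun k => B i k), fun i j => ?_⟩
  rw [PiLp.inner_apply]
  have : ∀ k, (inner ℝ ((WithLp.equiv 2 (Fin n → ℝ)).symm (fun k => B i k) k)
      ((WithLp.equiv 2 (Fin n → ℝ)).symm (fun k => B j k) k) : ℝ) = B i k * B j k := by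
    intro k
    simp [WithLp.equiv_symm_apply, PiLp.toLp_apply, RCLike.inner_apply, mul_comm]
  calc ∑ k, (inner ℝ ((WithLp.equiv 2 (Fin n → ℝ)).symm (fun k => B i k) k)
        ((WithLp.equiv 2 (Fin n → ℝ)).symm (fun k => B j k) k) : ℝ)
      = ∑ k, B i k * B j k := Finset.sum_congr rfl fun k _ => this k
    _ = ∑ k, B i k * B k j := Finset.sum_congr rfl fun k _ => by rw [hBsym k j]
    _ = (B * B) i j := (Matrix.mul_apply).symm
    _ = G i j := by rw [CFC.sqrt_mul_sqrt_self G hG.nonneg]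


set_option maxHeartbeats 1000000 in
/-- **Schoenberg's theorem, forward direction.** A function of the form
`φ(D) = ∫ (1 - exp (-λ D))/λ dμ(λ)` with `μ` a nonnegative measure on `(0,∞)`
satisfying `∫ min(1, 1/λ) dμ(λ) < ∞` maps every matrix of squared Euclidean distances
between points of `ℝ^p` to a matrix of squared distances between points of a real
Hilbert space. -/
theorem schoenberg_forward (μ : Measure ℝ)
    (hμ : ∫⁻ l in Ioi (0 : ℝ), ENNReal.ofReal (min 1 (1 / l)) ∂μ ≠ ⊤)
    (φ : ℝ → ℝ)
    (hφ : ∀ D : ℝ, φ D = ∫ l in Ioi (0 : ℝ), (1 - Real.exp (-(l * D))) / l ∂μ)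
    (p n : ℕ) (hp : 1 ≤ p) (x : Fin n → EuclideanSpace ℝ (Fin p)) :
    IsHilbertSqDistMatrix (fun i j => φ (‖x i - x j‖ ^ 2)) := by
  classical
  set F : ℝ → ℝ → ℝ := fun D l => (1 - Real.exp (-(l * D))) / l with hF
  have hint : ∀ D : ℝ, 0 ≤ D → IntegrableOn (F D) (Ioi 0) μ := fun D hD =>
    integrable_kernel μ hμ hD
  set A : Fin n → ℝ := fun i => ‖x i‖ ^ 2 with hA
  set C : Fin n → Fin n → ℝ := fun i j => ‖x i - x j‖ ^ 2 with hC
  have hA0 : ∀ i, 0 ≤ A i := fun i => sq_nonneg _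
  have hC0 : ∀ i j, 0 ≤ C i j := fun i j => sq_nonneg _
  have hCsym : ∀ i j, C i j = C j i := fun i j => by
    simp only [hC]; rw [norm_sub_rev]
  have hφ0 : φ 0 = 0 := by
    rw [hφ]
    have : ∀ l : ℝ, (1 - Real.exp (-(l * 0))) / l = 0 := fun l => by simp
    simp [this]
  set G : Matrix (Fin n) (Fin n) ℝ :=
    Matrix.of fun i j => (φ (A i) + φ (A j) - φ (C i j)) / 2 with hG
  -- integral representation of G entries
  have hGint : ∀ i j, G i j = ∫ l in Ioi (0:ℝ),
      (F (A i) l + F (A j) l - F (C i j) l) / 2 ∂μ := by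
    intro i j
    have hadd : IntegrableOn (fun l => F (A i) l + F (A j) l) (Ioi 0) μ :=
      (hint _ (hA0 i)).add (hint _ (hA0 j))
    rw [integral_div, integral_sub hadd (hint _ (hC0 i j)),
      integral_add (hint _ (hA0 i)) (hint _ (hA0 j))]
    simp only [hG, Matrix.of_apply, hφ, hF]
  -- positive semidefiniteness of G
  have hGpsd : G.PosSemidef := by
    refine posSemidef_of_quadform _ (fun i j => by
      simp only [hG, Matrix.of_apply, hCsym i j]; ring) fun c => ?_
    have hrep : ∑ i, ∑ j, c i * c j * G i j
        = ∫ l in Ioi (0:ℝ), ∑ i, ∑ j,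
            c i * c j * ((F (A i) l + F (A j) l - F (C i j) l) / 2) ∂μ := by
      have hintone : ∀ i j : Fin n, IntegrableOn
          (fun l => c i * c j * ((F (A i) l + F (A j) l - F (C i j) l) / 2)) (Ioi 0) μ :=
        fun i j => ((((hint _ (hA0 i)).add (hint _ (hA0 j))).sub
          (hint _ (hC0 i j))).div_const 2).const_mul _
      rw [integral_finset_sum _ (fun i _ => integrable_finset_sum _ fun j _ => hintone i j)]
      refine Finset.sum_congr rfl fun i _ => ?_
      rw [integral_finset_sum _ (fun j _ => hintone i j)]
      refine Finset.sum_congr rfl fun j _ => ?_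
      rw [integral_const_mul, ← hGint i j]
    rw [hrep]
    refine setIntegral_nonneg measurableSet_Ioi fun l hl => ?_
    have hlpos : (0:ℝ) < l := hl
    -- augmented points and coefficients
    set w : Fin (n+1) → EuclideanSpace ℝ (Fin p) := Fin.cons 0 x with hw
    set e : Fin (n+1) → ℝ := Fin.cons (-(∑ i, c i)) c with he
    have hg := gauss_quadform w hlpos.le e
    set S : ℝ := ∑ i, c i with hS
    set T : ℝ := ∑ i, c i * Real.exp (-(l * A i)) with hT
    set Q : ℝ := ∑ i, ∑ j, c i * c j * Real.exp (-(l * C i j)) with hQ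
    have e0 : e 0 = -S := by rw [he, Fin.cons_zero]
    have es : ∀ i : Fin n, e i.succ = c i := fun i => by rw [he, Fin.cons_succ]
    have w0 : w 0 = 0 := by rw [hw, Fin.cons_zero]
    have ws : ∀ i : Fin n, w i.succ = x i := fun i => by rw [hw, Fin.cons_succ]
    have E00 : Real.exp (-(l * ‖w 0 - w 0‖ ^ 2)) = 1 := by
      rw [w0]; simp
    have E0s : ∀ j : Fin n, Real.exp (-(l * ‖w 0 - w j.succ‖ ^ 2))
        = Real.exp (-(l * A j)) := fun j => by
      rw [w0, ws, zero_sub, norm_neg]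
    have Es0 : ∀ i : Fin n, Real.exp (-(l * ‖w i.succ - w 0‖ ^ 2))
        = Real.exp (-(l * A i)) := fun i => by
      rw [w0, ws, sub_zero]
    have Ess : ∀ i j : Fin n, Real.exp (-(l * ‖w i.succ - w j.succ‖ ^ 2))
        = Real.exp (-(l * C i j)) := fun i j => by rw [ws, ws]
    have h1 : ∑ j : Fin n, -S * c j * Real.exp (-(l * A j)) = -(S * T) := by
      calc ∑ j : Fin n, -S * c j * Real.exp (-(l * A j))
          = ∑ j : Fin n, -(S * (c j * Real.exp (-(l * A j)))) :=
            Finset.sum_congr rfl fun j _ => by ring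
        _ = -∑ j : Fin n, S * (c j * Real.exp (-(l * A j))) := by
            rw [Finset.sum_neg_distrib]
        _ = -(S * T) := by rw [hT, Finset.mul_sum]
    have expand : (∑ i, ∑ j, e i * e j * Real.exp (-(l * ‖w i - w j‖ ^ 2)))
        = S * S - S * T - T * S + Q := by
      calc (∑ i, ∑ j, e i * e j * Real.exp (-(l * ‖w i - w j‖ ^ 2)))
          = (e 0 * e 0 * Real.exp (-(l * ‖w 0 - w 0‖ ^ 2))
              + ∑ j : Fin n, e 0 * e j.succ * Real.exp (-(l * ‖w 0 - w j.succ‖ ^ 2)))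
            + ∑ i : Fin n, (e i.succ * e 0 * Real.exp (-(l * ‖w i.succ - w 0‖ ^ 2))
              + ∑ j : Fin n, e i.succ * e j.succ
                  * Real.exp (-(l * ‖w i.succ - w j.succ‖ ^ 2))) := by
            rw [Fin.sum_univ_succ]
            congr 1
            · rw [Fin.sum_univ_succ]
            · exact Finset.sum_congr rfl fun i _ => by rw [Fin.sum_univ_succ]
        _ = (-S * -S * 1 + ∑ j : Fin n, -S * c j * Real.exp (-(l * A j)))
            + ∑ i : Fin n, (c i * -S * Real.exp (-(l * A i))
              + ∑ j : Fin n, c i * c j * Real.exp (-(l * C i j))) := by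
            rw [e0, E00]
            congr 1
            · congr 1
              exact Finset.sum_congr rfl fun j _ => by rw [es j, E0s j]
            · refine Finset.sum_congr rfl fun i _ => ?_
              rw [es i, Es0 i]
              congr 1
        _ = S * S - S * T - T * S + Q := by
            rw [h1, Finset.sum_add_distrib]
            have h2 : ∑ i : Fin n, c i * -S * Real.exp (-(l * A i)) = -(S * T) := by
              rw [← h1]
              exact Finset.sum_congr rfl fun i _ => by ring
            rw [h2, ← hQ]
            ring
    have lhs_eq : ∑ i, ∑ j, c i * c j * ((F (A i) l + F (A j) l - F (C i j) l) / 2)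
        = (S * S - S * T - T * S + Q) / (2 * l) := by
      have hl0 : l ≠ 0 := ne_of_gt hlpos
      have n1 : ∑ i, ∑ j, c i * c j = S * S := by
        rw [hS, Finset.sum_mul_sum]
      have n2 : ∑ i, ∑ j, c i * c j * Real.exp (-(l * A i)) = T * S := by
        calc ∑ i, ∑ j, c i * c j * Real.exp (-(l * A i))
            = ∑ i, ∑ j, (c i * Real.exp (-(l * A i))) * c j :=
              Finset.sum_congr rfl fun i _ => Finset.sum_congr rfl fun j _ => by ring
          _ = (∑ i, c i * Real.exp (-(l * A i))) * (∑ j, c j) :=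
              (Finset.sum_mul_sum _ _ _ _).symm
          _ = T * S := by rw [hT, hS]
      have n3 : ∑ i, ∑ j, c i * c j * Real.exp (-(l * A j)) = S * T := by
        calc ∑ i, ∑ j, c i * c j * Real.exp (-(l * A j))
            = ∑ i, ∑ j, c i * (c j * Real.exp (-(l * A j))) :=
              Finset.sum_congr rfl fun i _ => Finset.sum_congr rfl fun j _ => by ring
          _ = (∑ i, c i) * (∑ j, c j * Real.exp (-(l * A j))) :=
              (Finset.sum_mul_sum _ _ _ _).symm
          _ = S * T := by rw [hT, hS]
      calc ∑ i, ∑ j, c i * c j * ((F (A i) l + F (A j) l - F (C i j) l) / 2)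
          = ∑ i, ∑ j, (c i * c j - c i * c j * Real.exp (-(l * A i))
              - c i * c j * Real.exp (-(l * A j))
              + c i * c j * Real.exp (-(l * C i j))) / (2 * l) := by
            refine Finset.sum_congr rfl fun i _ => Finset.sum_congr rfl fun j _ => ?_
            show c i * c j * (((1 - Real.exp (-(l * A i))) / l
              + (1 - Real.exp (-(l * A j))) / l
              - (1 - Real.exp (-(l * C i j))) / l) / 2) = _
            field_simp
            ring
        _ = (∑ i, ∑ j, (c i * c j - c i * c j * Real.exp (-(l * A i))
              - c i * c j * Real.exp (-(l * A j))
              + c i * c j * Real.exp (-(l * C i j)))) / (2 * l) := by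
            simp only [Finset.sum_div]
        _ = (S * S - S * T - T * S + Q) / (2 * l) := by
            congr 1
            simp only [Finset.sum_add_distrib, Finset.sum_sub_distrib]
            rw [n1, n2, n3, ← hQ]
            ring
    rw [lhs_eq, ← expand]
    exact div_nonneg hg (by linarith)
  obtain ⟨y, hy⟩ := realize_psd G hGpsd
  refine ⟨EuclideanSpace ℝ (Fin n), by infer_instance,
    by infer_instance, by infer_instance, y, fun i j => ?_⟩
  have hsq : ∀ v : EuclideanSpace ℝ (Fin n), ‖v‖ ^ 2 = (inner ℝ v v : ℝ) :=
    fun v => (real_inner_self_eq_norm_sq v).symm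
  rw [@norm_sub_sq_real, hsq, hsq, hy, hy, hy]
  have hCii : C i i = 0 := by simp [hC]
  have hCjj : C j j = 0 := by simp [hC]
  simp only [hG, Matrix.of_apply, hCii, hCjj, hφ0]
  have : ‖x i - x j‖ ^ 2 = C i j := rfl
  rw [this]
  ring
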